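/- Let a, b, c > 0, 2 < q < 10/3, 14/3 < p ≤ 6, let C_p, C_q > 0 be positive parameters, and suppose 0 < μ < μ*. Then the function h(t) = (a/2) t² + (b/4) t⁴ − (C_p^p/p) c^{p(1−δ_p)} t^{pδ_p} − (μ C_q^q/q) c^{q(1−δ_q)} t^{qδ_q} on (0, ∞) has a local strict minimum at a negative level and a global strict maximum at a positive level; moreover there exist 0 < R₀ < R₁ (depending on c and μ) such that h(R₀) = 0 = h(R₁) and, for t > 0, h(t) > 0 if and only if t ∈ (R₀, R₁). -/

import Mathlib

open Real Set

set_option maxHeartbeats 1000000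

section Helpers

/-- Shape of `φ(t) = c₁ + c₂ t² − c₃ tᵉ`, `e > 2`: positive then negative. -/
lemma phi_shape (c₁ c₂ c₃ e : ℝ) (h₁ : 0 < c₁) (h₂ : 0 < c₂) (h₃ : 0 < c₃) (he : 2 < e) :
    ∃ T, 0 < T ∧ (∀ t, 0 ≤ t → t < T → 0 < c₁ + c₂ * t ^ (2:ℝ) - c₃ * t ^ e) ∧
      (∀ t, T < t → c₁ + c₂ * t ^ (2:ℝ) - c₃ * t ^ e < 0) := by
  set φ : ℝ → ℝ := fun t => c₁ + c₂ * t ^ (2:ℝ) - c₃ * t ^ e with hφ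
  have hcont : Continuous φ := by
    apply Continuous.sub
    · exact continuous_const.add (continuous_const.mul (Real.continuous_rpow_const (by norm_num)))
    · exact continuous_const.mul (Real.continuous_rpow_const (by linarith))
  have hderiv : ∀ x : ℝ, HasDerivAt φ (c₂ * (2 * x ^ (1:ℝ)) - c₃ * (e * x ^ (e - 1))) x := by
    intro x
    have d1 : HasDerivAt (fun t : ℝ => t ^ (2:ℝ)) (2 * x ^ (2 - 1 : ℝ)) x :=
      Real.hasDerivAt_rpow_const (Or.inr (by norm_num))
    have d2 : HasDerivAt (fun t : ℝ => t ^ e) (e * x ^ (e - 1)) x :=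
      Real.hasDerivAt_rpow_const (Or.inr (by linarith))
    have := ((d1.const_mul c₂).const_add c₁).sub (d2.const_mul c₃)
    have h21 : (2:ℝ) - 1 = 1 := by norm_num
    rw [h21] at this
    exact this
  set t₀ : ℝ := (2 * c₂ / (e * c₃)) ^ ((1:ℝ) / (e - 2)) with ht₀def
  have hbase : 0 < 2 * c₂ / (e * c₃) := by positivity
  have ht₀ : 0 < t₀ := Real.rpow_pos_of_pos hbase _
  have ht₀pow : t₀ ^ (e - 2) = 2 * c₂ / (e * c₃) := by
    rw [ht₀def, ← Real.rpow_mul hbase.le, one_div, inv_mul_cancel₀ (by linarith), Real.rpow_one]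
  -- derivative sign
  have dpos : ∀ x, 0 < x → x < t₀ → 0 < c₂ * (2 * x ^ (1:ℝ)) - c₃ * (e * x ^ (e - 1)) := by
    intro x hx hxt
    have h1 : x ^ (e - 1) = x ^ (1:ℝ) * x ^ (e - 2) := by
      rw [← Real.rpow_add hx]; ring_nf
    have h2 : x ^ (e - 2) < 2 * c₂ / (e * c₃) := by
      rw [← ht₀pow]; exact Real.rpow_lt_rpow hx.le hxt (by linarith)
    have hx1 : 0 < x ^ (1:ℝ) := Real.rpow_pos_of_pos hx _
    rw [h1]
    have : c₃ * (e * (x ^ (1:ℝ) * x ^ (e-2))) < c₃ * (e * (x ^ (1:ℝ) * (2 * c₂ / (e * c₃)))) := by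
      apply mul_lt_mul_of_pos_left _ h₃
      apply mul_lt_mul_of_pos_left _ (by linarith)
      exact mul_lt_mul_of_pos_left h2 hx1
    have heq : c₃ * (e * (x ^ (1:ℝ) * (2 * c₂ / (e * c₃)))) = c₂ * (2 * x ^ (1:ℝ)) := by
      field_simp
    linarith [heq ▸ this]
  have dneg : ∀ x, t₀ < x → c₂ * (2 * x ^ (1:ℝ)) - c₃ * (e * x ^ (e - 1)) < 0 := by
    intro x hxt
    have hx : 0 < x := ht₀.trans hxt
    have h1 : x ^ (e - 1) = x ^ (1:ℝ) * x ^ (e - 2) := by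
      rw [← Real.rpow_add hx]; ring_nf
    have h2 : 2 * c₂ / (e * c₃) < x ^ (e - 2) := by
      rw [← ht₀pow]; exact Real.rpow_lt_rpow ht₀.le hxt (by linarith)
    have hx1 : 0 < x ^ (1:ℝ) := Real.rpow_pos_of_pos hx _
    rw [h1]
    have : c₃ * (e * (x ^ (1:ℝ) * (2 * c₂ / (e * c₃)))) < c₃ * (e * (x ^ (1:ℝ) * x ^ (e-2))) := by
      apply mul_lt_mul_of_pos_left _ h₃
      apply mul_lt_mul_of_pos_left _ (by linarith)
      exact mul_lt_mul_of_pos_left h2 hx1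
    have heq : c₃ * (e * (x ^ (1:ℝ) * (2 * c₂ / (e * c₃)))) = c₂ * (2 * x ^ (1:ℝ)) := by
      field_simp
    linarith [heq ▸ this]
  have hmono : StrictMonoOn φ (Icc 0 t₀) := by
    apply strictMonoOn_of_deriv_pos (convex_Icc 0 t₀) hcont.continuousOn
    intro x hx
    rw [interior_Icc] at hx
    rw [(hderiv x).deriv]
    exact dpos x hx.1 hx.2
  have hanti : StrictAntiOn φ (Ici t₀) := by
    apply strictAntiOn_of_deriv_neg (convex_Ici t₀) hcont.continuousOn
    intro x hx
    rw [interior_Ici] at hx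
    rw [(hderiv x).deriv]
    exact dneg x hx
  have hφ0 : φ 0 = c₁ := by
    simp [hφ, Real.zero_rpow (by norm_num : (2:ℝ) ≠ 0), Real.zero_rpow (by linarith : e ≠ 0)]
  have hφpos0 : ∀ t, 0 ≤ t → t ≤ t₀ → 0 < φ t := by
    intro t ht htt
    have := hmono.monotoneOn (Set.mem_Icc.2 ⟨le_refl 0, ht₀.le⟩) (Set.mem_Icc.2 ⟨ht, htt⟩) ht
    rw [hφ0] at this; linarith
  -- far negative point
  set N : ℝ := ((c₁ + c₂ + 1) / c₃) ^ ((1:ℝ) / (e - 2)) with hN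
  set M : ℝ := max 1 (max t₀ N) + 1 with hM
  have hM1 : 1 ≤ M := by
    have := le_max_left 1 (max t₀ N); simp only [hM]; linarith
  have hM0 : 0 < M := by linarith
  have hMt₀ : t₀ < M := by
    have := (le_max_left t₀ N).trans (le_max_right 1 (max t₀ N)); simp only [hM]; linarith
  have hMN : N ≤ M := by
    have := (le_max_right t₀ N).trans (le_max_right 1 (max t₀ N)); simp only [hM]; linarith
  have hNbase : 0 < (c₁ + c₂ + 1) / c₃ := by positivity
  have hNpow : N ^ (e - 2) = (c₁ + c₂ + 1) / c₃ := by
    rw [hN, ← Real.rpow_mul hNbase.le, one_div, inv_mul_cancel₀ (by linarith), Real.rpow_one]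
  have hφM : φ M < 0 := by
    have hMe : M ^ e = M ^ (2:ℝ) * M ^ (e - 2) := by
      rw [← Real.rpow_add hM0]; ring_nf
    have h2 : (c₁ + c₂ + 1) / c₃ ≤ M ^ (e - 2) := by
      rw [← hNpow]
      exact Real.rpow_le_rpow (Real.rpow_pos_of_pos hNbase _).le hMN (by linarith)
    have hM2 : (1:ℝ) ≤ M ^ (2:ℝ) := by
      have := Real.rpow_le_rpow (by norm_num : (0:ℝ) ≤ 1) hM1 (by norm_num : (0:ℝ) ≤ 2)
      rwa [Real.one_rpow] at this
    have : c₃ * M ^ e ≥ (c₁ + c₂ + 1) * M ^ (2:ℝ) := by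
      rw [hMe]
      calc c₃ * (M ^ (2:ℝ) * M ^ (e-2)) = (c₃ * M ^ (e-2)) * M ^ (2:ℝ) := by ring
        _ ≥ ((c₁ + c₂ + 1)) * M ^ (2:ℝ) := by
            apply mul_le_mul_of_nonneg_right _ (by positivity)
            calc c₁ + c₂ + 1 = c₃ * ((c₁ + c₂ + 1)/c₃) := by field_simp
              _ ≤ c₃ * M ^ (e-2) := by exact mul_le_mul_of_nonneg_left h2 h₃.le
    have : φ M ≤ c₁ + c₂ * M ^ (2:ℝ) - (c₁ + c₂ + 1) * M ^ (2:ℝ) := by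
      simp only [hφ]; linarith
    nlinarith
  -- zero of φ
  obtain ⟨T, hTmem, hTzero⟩ : ∃ T ∈ Icc t₀ M, φ T = 0 := by
    have := intermediate_value_Icc' hMt₀.le hcont.continuousOn
    have h0 : (0:ℝ) ∈ Icc (φ M) (φ t₀) :=
      ⟨hφM.le, (hφpos0 t₀ ht₀.le le_rfl).le⟩
    obtain ⟨T, hT, hTz⟩ := this h0
    exact ⟨T, hT, hTz⟩
  have hTt₀ : t₀ < T := by
    rcases eq_or_lt_of_le hTmem.1 with h | h
    · exfalso; have := hφpos0 t₀ ht₀.le le_rfl; rw [h] at this; linarith [hTzero]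
    · exact h
  refine ⟨T, ht₀.trans hTt₀, ?_, ?_⟩
  · intro t ht htT
    rcases le_or_gt t t₀ with h | h
    · exact hφpos0 t ht h
    · have := hanti (Set.mem_Ici.2 h.le) (Set.mem_Ici.2 hTmem.1) htT
      rw [hTzero] at this; exact this
  · intro t hTt
    have := hanti (Set.mem_Ici.2 hTmem.1) (Set.mem_Ici.2 (hTt₀.le.trans hTt.le)) hTt
    rw [hTzero] at this; exact this

lemma F_shape (a b A r s : ℝ) (ha : 0 < a) (hb : 0 < b) (hA : 0 < A)
    (hr0 : 0 < r) (hr2 : r < 2) (hs : 4 < s) :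
    ∃ T, 0 < T ∧
      StrictMonoOn (fun t : ℝ => a * t ^ (2 - r) + b * t ^ (4 - r) - A * t ^ (s - r)) (Icc 0 T) ∧
      StrictAntiOn (fun t : ℝ => a * t ^ (2 - r) + b * t ^ (4 - r) - A * t ^ (s - r)) (Ici T) := by
  set F : ℝ → ℝ := fun t => a * t ^ (2 - r) + b * t ^ (4 - r) - A * t ^ (s - r) with hF
  have hcont : Continuous F := by
    apply Continuous.sub
    · exact (continuous_const.mul (Real.continuous_rpow_const (by linarith))).add
        (continuous_const.mul (Real.continuous_rpow_const (by linarith)))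
    · exact continuous_const.mul (Real.continuous_rpow_const (by linarith))
  obtain ⟨T, hT0, hφpos, hφneg⟩ :=
    phi_shape (a * (2 - r)) (b * (4 - r)) (A * (s - r)) (s - 2)
      (by nlinarith) (by nlinarith) (by nlinarith) (by linarith)
  have hderiv : ∀ x : ℝ, 0 < x → HasDerivAt F
      (x ^ (1 - r) * (a * (2 - r) + b * (4 - r) * x ^ (2:ℝ) - A * (s - r) * x ^ (s - 2))) x := by
    intro x hx
    have d1 : HasDerivAt (fun t : ℝ => t ^ (2 - r)) ((2 - r) * x ^ (2 - r - 1)) x :=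
      Real.hasDerivAt_rpow_const (Or.inl hx.ne')
    have d2 : HasDerivAt (fun t : ℝ => t ^ (4 - r)) ((4 - r) * x ^ (4 - r - 1)) x :=
      Real.hasDerivAt_rpow_const (Or.inl hx.ne')
    have d3 : HasDerivAt (fun t : ℝ => t ^ (s - r)) ((s - r) * x ^ (s - r - 1)) x :=
      Real.hasDerivAt_rpow_const (Or.inl hx.ne')
    have H := ((d1.const_mul a).add (d2.const_mul b)).sub (d3.const_mul A)
    refine H.congr_deriv ?_
    have e1 : x ^ (2 - r - 1) = x ^ (1 - r) := by ring_nf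
    have e2 : x ^ (4 - r - 1) = x ^ (1 - r) * x ^ (2:ℝ) := by
      rw [← Real.rpow_add hx]; ring_nf
    have e3 : x ^ (s - r - 1) = x ^ (1 - r) * x ^ (s - 2) := by
      rw [← Real.rpow_add hx]; ring_nf
    rw [e1, e2, e3]; ring
  refine ⟨T, hT0, ?_, ?_⟩
  · apply strictMonoOn_of_deriv_pos (convex_Icc 0 T) hcont.continuousOn
    intro x hx
    rw [interior_Icc] at hx
    rw [(hderiv x hx.1).deriv]
    exact mul_pos (Real.rpow_pos_of_pos hx.1 _) (hφpos x hx.1.le hx.2)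
  · apply strictAntiOn_of_deriv_neg (convex_Ici T) hcont.continuousOn
    intro x hx
    rw [interior_Ici] at hx
    have hx0 : 0 < x := hT0.trans hx
    rw [(hderiv x hx0).deriv]
    exact mul_neg_of_pos_of_neg (Real.rpow_pos_of_pos hx0 _) (hφneg x hx)

lemma key_lemma (a b A E r s : ℝ) (ha : 0 < a) (hb : 0 < b) (hA : 0 < A) (hE : 0 < E)
    (hr0 : 0 < r) (hr2 : r < 2) (hs : 4 < s)
    (h : ℝ → ℝ)
    (hh : ∀ t, h t = a / 2 * t ^ 2 + b / 4 * t ^ 4 - A * t ^ s - E * t ^ r)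
    (τ : ℝ) (hτ0 : 0 < τ) (hτpos : 0 < h τ) :
    (∃ t₁ t₂ : ℝ, 0 < t₁ ∧ t₁ < t₂ ∧ h t₁ < 0 ∧ 0 < h t₂ ∧
      (∃ ε > 0, ∀ t, 0 < t → |t - t₁| < ε → t ≠ t₁ → h t₁ < h t) ∧
      (∀ t, 0 < t → t ≠ t₂ → h t < h t₂)) ∧
    ∃ R₀ R₁ : ℝ, 0 < R₀ ∧ R₀ < R₁ ∧ h R₀ = 0 ∧ h R₁ = 0 ∧
      ∀ t, 0 < t → (0 < h t ↔ R₀ < t ∧ t < R₁) := by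
  have hfun : h = fun t => a / 2 * t ^ 2 + b / 4 * t ^ 4 - A * t ^ s - E * t ^ r := funext hh
  set F : ℝ → ℝ := fun t => a * t ^ (2 - r) + b * t ^ (4 - r) - (A * s) * t ^ (s - r) with hFdef
  have hcont : Continuous h := by
    rw [hfun]
    apply Continuous.sub
    apply Continuous.sub
    · exact (continuous_const.mul (continuous_pow 2)).add (continuous_const.mul (continuous_pow 4))
    · exact continuous_const.mul (Real.continuous_rpow_const (by linarith))
    · exact continuous_const.mul (Real.continuous_rpow_const (by linarith))
  have hF0 : F 0 = 0 := by
    simp [hFdef, Real.zero_rpow (by linarith : (2:ℝ) - r ≠ 0),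
      Real.zero_rpow (by linarith : (4:ℝ) - r ≠ 0), Real.zero_rpow (by linarith : s - r ≠ 0)]
  have hh0 : h 0 = 0 := by
    rw [hh 0]
    simp [Real.zero_rpow (by linarith : s ≠ 0), Real.zero_rpow (by linarith : r ≠ 0)]
  have hFcont : Continuous F := by
    apply Continuous.sub
    · exact (continuous_const.mul (Real.continuous_rpow_const (by linarith))).add
        (continuous_const.mul (Real.continuous_rpow_const (by linarith)))
    · exact continuous_const.mul (Real.continuous_rpow_const (by linarith))
  -- derivative of h
  have hderiv : ∀ x : ℝ, 0 < x → HasDerivAt h (x ^ (r - 1) * (F x - E * r)) x := by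
    intro x hx
    have d2 : HasDerivAt (fun t : ℝ => t ^ (2:ℕ)) (2 * x ^ (1:ℕ)) x := by
      simpa using hasDerivAt_pow 2 x
    have d4 : HasDerivAt (fun t : ℝ => t ^ (4:ℕ)) (4 * x ^ (3:ℕ)) x := by
      simpa using hasDerivAt_pow 4 x
    have ds : HasDerivAt (fun t : ℝ => t ^ s) (s * x ^ (s - 1)) x :=
      Real.hasDerivAt_rpow_const (Or.inl hx.ne')
    have dr : HasDerivAt (fun t : ℝ => t ^ r) (r * x ^ (r - 1)) x :=
      Real.hasDerivAt_rpow_const (Or.inl hx.ne')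
    have H := (((d2.const_mul (a/2)).add (d4.const_mul (b/4))).sub (ds.const_mul A)).sub
      (dr.const_mul E)
    rw [hfun]
    refine H.congr_deriv ?_
    have e1 : x ^ (r - 1) * x ^ (2 - r) = x := by
      rw [← Real.rpow_add hx, show r - 1 + (2 - r) = (1:ℝ) by ring, Real.rpow_one]
    have e2 : x ^ (r - 1) * x ^ (4 - r) = x ^ (3:ℕ) := by
      rw [← Real.rpow_add hx, show r - 1 + (4 - r) = ((3:ℕ):ℝ) by norm_num, Real.rpow_natCast]
    have e3 : x ^ (r - 1) * x ^ (s - r) = x ^ (s - 1) := by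
      rw [← Real.rpow_add hx]; ring_nf
    simp only [hFdef]
    rw [mul_sub, mul_sub, mul_add]
    rw [show x ^ (r-1) * (a * x ^ (2-r)) = a * (x ^ (r-1) * x ^ (2-r)) by ring, e1]
    rw [show x ^ (r-1) * (b * x ^ (4-r)) = b * (x ^ (r-1) * x ^ (4-r)) by ring, e2]
    rw [show x ^ (r-1) * (A * s * x ^ (s-r)) = A * s * (x ^ (r-1) * x ^ (s-r)) by ring, e3]
    have ex1 : x ^ (1:ℕ) = x := pow_one x
    ring
  -- F exceeds E*r somewhere
  obtain ⟨tstar, htstar0, htstar⟩ : ∃ t, 0 < t ∧ E * r < F t := by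
    by_contra hcon
    push_neg at hcon
    have hanti : AntitoneOn h (Icc 0 τ) := by
      apply antitoneOn_of_deriv_nonpos (convex_Icc 0 τ) hcont.continuousOn
      · intro x hx
        rw [interior_Icc] at hx
        exact ((hderiv x hx.1).differentiableAt).differentiableWithinAt
      · intro x hx
        rw [interior_Icc] at hx
        rw [(hderiv x hx.1).deriv]
        have := hcon x hx.1
        have hp : (0:ℝ) ≤ x ^ (r - 1) := (Real.rpow_pos_of_pos hx.1 _).le
        nlinarith
    have := hanti (Set.mem_Icc.2 ⟨le_rfl, hτ0.le⟩) (Set.mem_Icc.2 ⟨hτ0.le, le_rfl⟩) hτ0.le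
    rw [hh0] at this
    linarith
  obtain ⟨T, hT0, hFmono, hFanti⟩ := F_shape a b (A * s) r s ha hb (by positivity) hr0 hr2 hs
  have hFmono' : StrictMonoOn F (Icc 0 T) := hFmono
  have hFanti' : StrictAntiOn F (Ici T) := hFanti
  set D : ℝ := E * r with hDdef
  have hD0 : 0 < D := by positivity
  have hFT : D < F T := by
    rcases le_or_gt tstar T with hc | hc
    · have := hFmono'.monotoneOn (Set.mem_Icc.2 ⟨htstar0.le, hc⟩)
        (Set.mem_Icc.2 ⟨hT0.le, le_rfl⟩) hc
      linarith
    · have := hFanti' (Set.mem_Ici.2 le_rfl) (Set.mem_Ici.2 hc.le) hc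
      linarith
  -- s₀ : first crossing
  obtain ⟨s₀, hs₀mem, hs₀⟩ : ∃ x ∈ Icc 0 T, F x = D := by
    have := intermediate_value_Icc hT0.le hFcont.continuousOn
    exact this ⟨by rw [hF0]; exact hD0.le, hFT.le⟩
  have hs₀0 : 0 < s₀ := by
    rcases eq_or_lt_of_le hs₀mem.1 with hq | hq
    · exfalso; rw [← hq, hF0] at hs₀; linarith
    · exact hq
  have hs₀T : s₀ < T := by
    rcases eq_or_lt_of_le hs₀mem.2 with hq | hq
    · exfalso; rw [hq] at hs₀; linarith
    · exact hq
  -- far point M where F M < 0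
  have hFM : ∃ M, T < M ∧ F M < 0 := by
    set N : ℝ := ((a + b + 1) / (A * s)) ^ ((1:ℝ) / (s - 4)) with hN
    set M : ℝ := max 1 N + 1 with hM
    have hM1 : 1 ≤ M := by have := le_max_left 1 N; simp only [hM]; linarith
    have hM0 : 0 < M := by linarith
    have hMN : N ≤ M := by have := le_max_right 1 N; simp only [hM]; linarith
    have hNbase : 0 < (a + b + 1) / (A * s) := by positivity
    have hNpow : N ^ (s - 4) = (a + b + 1) / (A * s) := by
      rw [hN, ← Real.rpow_mul hNbase.le, one_div, inv_mul_cancel₀ (by linarith), Real.rpow_one]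
    have h2 : (a + b + 1) / (A * s) ≤ M ^ (s - 4) := by
      rw [← hNpow]
      exact Real.rpow_le_rpow (Real.rpow_pos_of_pos hNbase _).le hMN (by linarith)
    have hsplit : M ^ (s - r) = M ^ (4 - r) * M ^ (s - 4) := by
      rw [← Real.rpow_add hM0]; ring_nf
    have h24 : M ^ (2 - r) ≤ M ^ (4 - r) :=
      Real.rpow_le_rpow_of_exponent_le hM1 (by linarith)
    have hp4 : 0 < M ^ (4 - r) := Real.rpow_pos_of_pos hM0 _
    have hbound : (a + b + 1) * M ^ (4 - r) ≤ A * s * M ^ (s - r) := by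
      rw [hsplit]
      calc (a + b + 1) * M ^ (4 - r) = ((a + b + 1) / (A * s)) * (A * s) * M ^ (4 - r) := by
            field_simp
        _ ≤ M ^ (s - 4) * (A * s) * M ^ (4 - r) := by
            apply mul_le_mul_of_nonneg_right _ hp4.le
            exact mul_le_mul_of_nonneg_right h2 (by positivity)
        _ = A * s * (M ^ (4 - r) * M ^ (s - 4)) := by ring
    have hFMneg : F M < 0 := by
      have : F M ≤ (a + b) * M ^ (4 - r) - A * s * M ^ (s - r) := by
        simp only [hFdef]
        nlinarith [mul_le_mul_of_nonneg_left h24 ha.le]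
      nlinarith
    refine ⟨M, ?_, hFMneg⟩
    by_contra hcon
    push_neg at hcon
    have := hFmono' (Set.mem_Icc.2 ⟨le_rfl, hT0.le⟩) (Set.mem_Icc.2 ⟨hM0.le, hcon⟩) hM0
    rw [hF0] at this
    linarith
  obtain ⟨M, hTM, hFMneg⟩ := hFM
  obtain ⟨s₁, hs₁mem, hs₁⟩ : ∃ x ∈ Icc T M, F x = D := by
    have := intermediate_value_Icc' hTM.le hFcont.continuousOn
    exact this ⟨by linarith, hFT.le⟩
  have hTs₁ : T < s₁ := by
    rcases eq_or_lt_of_le hs₁mem.1 with hq | hq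
    · exfalso; rw [← hq] at hs₁; linarith
    · exact hq
  have hs₀s₁ : s₀ < s₁ := hs₀T.trans hTs₁
  -- sign of ψ = F - D
  have ψneg₁ : ∀ t, 0 < t → t < s₀ → F t < D := by
    intro t ht hts
    have := hFmono' (Set.mem_Icc.2 ⟨ht.le, (hts.le.trans hs₀T.le)⟩) hs₀mem hts
    linarith
  have ψpos : ∀ t, s₀ < t → t < s₁ → D < F t := by
    intro t hts hts1
    rcases le_or_gt t T with hc | hc
    · have := hFmono' hs₀mem (Set.mem_Icc.2 ⟨(hs₀0.trans hts).le, hc⟩) hts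
      linarith
    · have := hFanti' (Set.mem_Ici.2 hc.le) (Set.mem_Ici.2 hs₁mem.1) hts1
      linarith
  have ψneg₂ : ∀ t, s₁ < t → F t < D := by
    intro t hts
    have := hFanti' (Set.mem_Ici.2 hs₁mem.1) (Set.mem_Ici.2 (hs₁mem.1.trans hts.le)) hts
    linarith
  -- monotonicity of h
  have hA1 : StrictAntiOn h (Icc 0 s₀) := by
    apply strictAntiOn_of_deriv_neg (convex_Icc 0 s₀) hcont.continuousOn
    intro x hx
    rw [interior_Icc] at hx
    rw [(hderiv x hx.1).deriv]
    have := ψneg₁ x hx.1 hx.2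
    have hp : (0:ℝ) < x ^ (r - 1) := Real.rpow_pos_of_pos hx.1 _
    nlinarith
  have hM1 : StrictMonoOn h (Icc s₀ s₁) := by
    apply strictMonoOn_of_deriv_pos (convex_Icc s₀ s₁) hcont.continuousOn
    intro x hx
    rw [interior_Icc] at hx
    have hx0 : 0 < x := hs₀0.trans hx.1
    rw [(hderiv x hx0).deriv]
    have := ψpos x hx.1 hx.2
    have hp : (0:ℝ) < x ^ (r - 1) := Real.rpow_pos_of_pos hx0 _
    nlinarith
  have hA2 : StrictAntiOn h (Ici s₁) := by
    apply strictAntiOn_of_deriv_neg (convex_Ici s₁) hcont.continuousOn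
    intro x hx
    rw [interior_Ici] at hx
    have hx0 : 0 < x := (hs₀0.trans hs₀s₁).trans hx
    rw [(hderiv x hx0).deriv]
    have := ψneg₂ x hx
    have hp : (0:ℝ) < x ^ (r - 1) := Real.rpow_pos_of_pos hx0 _
    nlinarith
  -- h negative on (0, s₀]
  have hneg : ∀ t, 0 < t → t ≤ s₀ → h t < 0 := by
    intro t ht hts
    have := hA1 (Set.mem_Icc.2 ⟨le_rfl, hs₀0.le⟩) (Set.mem_Icc.2 ⟨ht.le, hts⟩) ht
    rw [hh0] at this
    exact this
  -- h s₁ > 0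
  have hs₁pos : 0 < h s₁ := by
    have hτs₀ : s₀ < τ := by
      by_contra hcon
      push_neg at hcon
      exact absurd hτpos (by linarith [hneg τ hτ0 hcon])
    rcases le_or_gt τ s₁ with hc | hc
    · have := hM1.monotoneOn (Set.mem_Icc.2 ⟨hτs₀.le, hc⟩)
        (Set.mem_Icc.2 ⟨hs₀s₁.le, le_rfl⟩) hc
      linarith
    · have := hA2 (Set.mem_Ici.2 le_rfl) (Set.mem_Ici.2 hc.le) hc
      linarith
  have hhs₀ : h s₀ < 0 := hneg s₀ hs₀0 le_rfl
  constructor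
  · refine ⟨s₀, s₁, hs₀0, hs₀s₁, hhs₀, hs₁pos, ⟨s₁ - s₀, by linarith, ?_⟩, ?_⟩
    · intro t ht habs htne
      have hts₁ : t < s₁ := by
        rcases abs_lt.1 habs with ⟨h1, h2⟩; linarith
      rcases lt_or_gt_of_ne htne with hc | hc
      · exact hA1 (Set.mem_Icc.2 ⟨ht.le, hc.le⟩) (Set.mem_Icc.2 ⟨hs₀0.le, le_rfl⟩) hc
      · exact hM1 (Set.mem_Icc.2 ⟨le_rfl, hs₀s₁.le⟩) (Set.mem_Icc.2 ⟨hc.le, hts₁.le⟩) hc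
    · intro t ht htne
      rcases le_or_gt t s₀ with hc | hc
      · linarith [hneg t ht hc]
      · rcases lt_or_gt_of_ne htne with hd | hd
        · exact hM1 (Set.mem_Icc.2 ⟨hc.le, hd.le⟩) (Set.mem_Icc.2 ⟨hs₀s₁.le, le_rfl⟩) hd
        · exact hA2 (Set.mem_Ici.2 le_rfl) (Set.mem_Ici.2 hd.le) hd
  · -- zeros R₀ R₁
    obtain ⟨R₀, hR₀mem, hR₀⟩ : ∃ x ∈ Icc s₀ s₁, h x = 0 := by
      have := intermediate_value_Icc hs₀s₁.le hcont.continuousOn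
      exact this ⟨hhs₀.le, hs₁pos.le⟩
    have hs₀R₀ : s₀ < R₀ := by
      rcases eq_or_lt_of_le hR₀mem.1 with hq | hq
      · exfalso; rw [← hq] at hR₀; linarith
      · exact hq
    have hR₀s₁ : R₀ < s₁ := by
      rcases eq_or_lt_of_le hR₀mem.2 with hq | hq
      · exfalso; rw [hq] at hR₀; linarith
      · exact hq
    -- far point where h < 0
    have hM2ex : ∃ M₂, s₁ < M₂ ∧ h M₂ < 0 := by
      set N : ℝ := ((a / 2 + b / 4 + 1) / A) ^ ((1:ℝ) / (s - 4)) with hN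
      set M₂ : ℝ := max 1 (max s₁ N) + 1 with hM₂
      have hMa : 1 ≤ M₂ := by have := le_max_left 1 (max s₁ N); simp only [hM₂]; linarith
      have hM₂0 : 0 < M₂ := by linarith
      have hMs₁ : s₁ < M₂ := by
        have := (le_max_left s₁ N).trans (le_max_right 1 (max s₁ N)); simp only [hM₂]; linarith
      have hMN : N ≤ M₂ := by
        have := (le_max_right s₁ N).trans (le_max_right 1 (max s₁ N)); simp only [hM₂]; linarith
      have hNbase : 0 < (a / 2 + b / 4 + 1) / A := by positivity
      have hNpow : N ^ (s - 4) = (a / 2 + b / 4 + 1) / A := by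
        rw [hN, ← Real.rpow_mul hNbase.le, one_div, inv_mul_cancel₀ (by linarith), Real.rpow_one]
      have h2 : (a / 2 + b / 4 + 1) / A ≤ M₂ ^ (s - 4) := by
        rw [← hNpow]
        exact Real.rpow_le_rpow (Real.rpow_pos_of_pos hNbase _).le hMN (by linarith)
      have hsplit : M₂ ^ s = M₂ ^ (s - 4) * M₂ ^ (4:ℕ) := by
        rw [← Real.rpow_natCast M₂ 4, ← Real.rpow_add hM₂0]
        norm_num
      have hp4 : (0:ℝ) < M₂ ^ (4:ℕ) := by positivity
      have hbound : (a / 2 + b / 4 + 1) * M₂ ^ (4:ℕ) ≤ A * M₂ ^ s := by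
        rw [hsplit]
        calc (a / 2 + b / 4 + 1) * M₂ ^ (4:ℕ)
            = ((a / 2 + b / 4 + 1) / A) * A * M₂ ^ (4:ℕ) := by field_simp
          _ ≤ M₂ ^ (s - 4) * A * M₂ ^ (4:ℕ) := by
              apply mul_le_mul_of_nonneg_right _ hp4.le
              exact mul_le_mul_of_nonneg_right h2 hA.le
          _ = A * (M₂ ^ (s - 4) * M₂ ^ (4:ℕ)) := by ring
      have h24 : M₂ ^ (2:ℕ) ≤ M₂ ^ (4:ℕ) := pow_le_pow_right₀ hMa (by norm_num)
      have hEr : 0 < E * M₂ ^ r := by positivity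
      have : h M₂ < 0 := by
        rw [hh M₂]
        nlinarith [mul_le_mul_of_nonneg_left h24 (by linarith : (0:ℝ) ≤ a / 2)]
      exact ⟨M₂, hMs₁, this⟩
    obtain ⟨M₂, hs₁M₂, hhM₂⟩ := hM2ex
    obtain ⟨R₁, hR₁mem, hR₁⟩ : ∃ x ∈ Icc s₁ M₂, h x = 0 := by
      have := intermediate_value_Icc' hs₁M₂.le hcont.continuousOn
      exact this ⟨hhM₂.le, hs₁pos.le⟩
    have hs₁R₁ : s₁ < R₁ := by
      rcases eq_or_lt_of_le hR₁mem.1 with hq | hq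
      · exfalso; rw [← hq] at hR₁; linarith
      · exact hq
    refine ⟨R₀, R₁, hs₀0.trans hs₀R₀, hR₀s₁.trans hs₁R₁, hR₀, hR₁, ?_⟩
    intro t ht
    constructor
    · intro hht
      constructor
      · by_contra hcon
        push_neg at hcon
        rcases le_or_gt t s₀ with hc | hc
        · linarith [hneg t ht hc]
        · have := hM1.monotoneOn (Set.mem_Icc.2 ⟨hc.le, hcon.trans hR₀s₁.le⟩) hR₀mem hcon
          rw [hR₀] at this
          linarith
      · by_contra hcon
        push_neg at hcon
        have := hA2.antitoneOn (Set.mem_Ici.2 hs₁R₁.le)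
          (Set.mem_Ici.2 (hs₁R₁.le.trans hcon)) hcon
        rw [hR₁] at this
        linarith
    · rintro ⟨h1, h2⟩
      rcases le_or_gt t s₁ with hc | hc
      · have := hM1 (Set.mem_Icc.2 ⟨hR₀mem.1, hR₀mem.2⟩) (Set.mem_Icc.2 ⟨hs₀R₀.le.trans h1.le, hc⟩) h1
        rw [hR₀] at this
        exact this
      · have := hA2 (Set.mem_Ici.2 hc.le) (Set.mem_Ici.2 hs₁R₁.le) h2
        rw [hR₁] at this
        exact this

end Helpers

theorem stmt_4 (a b c p q μ Cp Cq : ℝ)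
    (ha : 0 < a) (hb : 0 < b) (hc : 0 < c)
    (hq1 : 2 < q) (hq2 : q < 10/3) (hp1 : 14/3 < p) (hp2 : p ≤ 6)
    (hCp : 0 < Cp) (hCq : 0 < Cq)
    (δp δq : ℝ) (hδp : δp = 3 * (p - 2) / (2 * p)) (hδq : δq = 3 * (q - 2) / (2 * q))
    (K : ℝ) (hK : K = 8 * (4 - q * δq) / (p * δp * (p * δp - 2) * (p * δp - q * δq)))
    (Cpq : ℝ) (hCpq : Cpq = K ^ ((4 - q * δq) / (p * δp - 4)) -
      K ^ ((p * δp - q * δq) / (p * δp - 4)))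
    (μstar : ℝ)
    (hμstar : μstar = ((a / 2) * (b * p / (4 * Cp ^ p)) ^ ((2 - q * δq) / (p * δp - 4)) /
        c ^ (q * (1 - δq) + p * (1 - δp) * (2 - q * δq) / (p * δp - 4)) +
      (b / 4) ^ ((p * δp - q * δq) / (p * δp - 4)) *
        (p / Cp ^ p) ^ ((4 - q * δq) / (p * δp - 4)) /
        c ^ (q * (1 - δq) + p * (1 - δp) * (4 - q * δq) / (p * δp - 4))) *
        (q * Cpq / Cq ^ q))
    (hμ0 : 0 < μ) (hμ : μ < μstar)
    (h : ℝ → ℝ)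
    (hh : ∀ t, h t = a / 2 * t ^ 2 + b / 4 * t ^ 4
      - Cp ^ p / p * c ^ (p * (1 - δp)) * t ^ (p * δp)
      - μ * Cq ^ q / q * c ^ (q * (1 - δq)) * t ^ (q * δq)) :
    (∃ t₁ t₂ : ℝ, 0 < t₁ ∧ t₁ < t₂ ∧ h t₁ < 0 ∧ 0 < h t₂ ∧
      (∃ ε > 0, ∀ t, 0 < t → |t - t₁| < ε → t ≠ t₁ → h t₁ < h t) ∧
      (∀ t, 0 < t → t ≠ t₂ → h t < h t₂)) ∧
    ∃ R₀ R₁ : ℝ, 0 < R₀ ∧ R₀ < R₁ ∧ h R₀ = 0 ∧ h R₁ = 0 ∧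
      ∀ t, 0 < t → (0 < h t ↔ R₀ < t ∧ t < R₁) := by
  have hp0 : 0 < p := by linarith
  have hq0 : 0 < q := by linarith
  set s : ℝ := p * δp with hsdef
  set r : ℝ := q * δq with hrdef
  have hrval : r = 3 * (q - 2) / 2 := by rw [hrdef, hδq]; field_simp
  have hsval : s = 3 * (p - 2) / 2 := by rw [hsdef, hδp]; field_simp
  have hr0 : 0 < r := by rw [hrval]; linarith
  have hr2 : r < 2 := by rw [hrval]; linarith
  have hs4 : 4 < s := by rw [hsval]; linarith
  have hs40 : (0:ℝ) < s - 4 := by linarith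
  set A : ℝ := Cp ^ p / p * c ^ (p * (1 - δp)) with hAdef
  set E₀ : ℝ := Cq ^ q / q * c ^ (q * (1 - δq)) with hE₀def
  have hCpp : (0:ℝ) < Cp ^ p := Real.rpow_pos_of_pos hCp p
  have hCqq : (0:ℝ) < Cq ^ q := Real.rpow_pos_of_pos hCq q
  have hcP : (0:ℝ) < c ^ (p * (1 - δp)) := Real.rpow_pos_of_pos hc _
  have hcQ : (0:ℝ) < c ^ (q * (1 - δq)) := Real.rpow_pos_of_pos hc _
  have hA : 0 < A := by rw [hAdef]; positivity
  have hE₀ : 0 < E₀ := by rw [hE₀def]; positivity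
  have hh' : ∀ t, h t = a / 2 * t ^ 2 + b / 4 * t ^ 4 - A * t ^ s - (μ * E₀) * t ^ r := by
    intro t; rw [hh t, hAdef, hE₀def]; ring
  -- K bounds
  have hK0 : 0 < K := by
    rw [hK]
    exact div_pos (by linarith)
      (mul_pos (mul_pos (by linarith : (0:ℝ) < s) (by linarith : (0:ℝ) < s - 2))
        (by linarith : (0:ℝ) < s - r))
  have hK1 : K < 1 := by
    rw [hK]
    rw [div_lt_one (mul_pos (mul_pos (by linarith : (0:ℝ) < s) (by linarith : (0:ℝ) < s - 2))
      (by linarith : (0:ℝ) < s - r))]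
    nlinarith [mul_pos (by linarith : (0:ℝ) < s - 2) (by linarith : (0:ℝ) < s - r)]
  -- points
  set k : ℝ := K ^ ((1:ℝ) / (s - 4)) with hkdef
  have hk0 : 0 < k := Real.rpow_pos_of_pos hK0 _
  have hk1 : k < 1 := Real.rpow_lt_one hK0.le hK1 (by positivity)
  set tb : ℝ := (b / (4 * A)) ^ ((1:ℝ) / (s - 4)) with htbdef
  have htbase : (0:ℝ) < b / (4 * A) := by positivity
  have htb0 : 0 < tb := Real.rpow_pos_of_pos htbase _
  set τ : ℝ := k * tb with hτdef
  have hτ0 : 0 < τ := by positivity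
  -- rpow kit
  have fk : ∀ x : ℝ, K ^ (x / (s - 4)) = k ^ x := by
    intro x
    rw [hkdef, ← Real.rpow_mul hK0.le]
    congr 1; ring
  have ftb : ∀ x : ℝ, (b / (4 * A)) ^ (x / (s - 4)) = tb ^ x := by
    intro x
    rw [htbdef, ← Real.rpow_mul htbase.le]
    congr 1; ring
  have ftb4 : tb ^ (s - 4) = b / (4 * A) := by
    rw [htbdef, ← Real.rpow_mul htbase.le, one_div, inv_mul_cancel₀ (by linarith), Real.rpow_one]
  -- base identity
  have hbase : b / (4 * A) = (b * p / (4 * Cp ^ p)) / c ^ (p * (1 - δp)) := by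
    rw [hAdef]; field_simp
  -- μstar * E₀ identity
  have hμE : μstar * E₀ = (k ^ (4 - r) - k ^ (s - r)) *
      (a / 2 * tb ^ (2 - r) + b / 4 * tb ^ (4 - r)) := by
    have claim1 : (a / 2) * (b * p / (4 * Cp ^ p)) ^ ((2 - r) / (s - 4)) /
        c ^ (q * (1 - δq) + p * (1 - δp) * (2 - r) / (s - 4)) * c ^ (q * (1 - δq))
        = a / 2 * tb ^ (2 - r) := by
      rw [show q * (1 - δq) + p * (1 - δp) * (2 - r) / (s - 4)
          = q * (1 - δq) + p * (1 - δp) * ((2 - r) / (s - 4)) by ring]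
      rw [Real.rpow_add hc, Real.rpow_mul hc.le (p * (1 - δp))]
      rw [← ftb, hbase, Real.div_rpow (by positivity) hcP.le]
      field_simp
    have claim2 : (b / 4) ^ ((s - r) / (s - 4)) * (p / Cp ^ p) ^ ((4 - r) / (s - 4)) /
        c ^ (q * (1 - δq) + p * (1 - δp) * (4 - r) / (s - 4)) * c ^ (q * (1 - δq))
        = b / 4 * tb ^ (4 - r) := by
      rw [show (s - r) / (s - 4) = 1 + (4 - r) / (s - 4) by field_simp; ring]
      rw [Real.rpow_add (by positivity : (0:ℝ) < b / 4), Real.rpow_one]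
      rw [show q * (1 - δq) + p * (1 - δp) * (4 - r) / (s - 4)
          = q * (1 - δq) + p * (1 - δp) * ((4 - r) / (s - 4)) by ring]
      rw [Real.rpow_add hc, Real.rpow_mul hc.le (p * (1 - δp))]
      rw [← ftb, hbase, Real.div_rpow (by positivity) hcP.le,
        Real.div_rpow (by positivity : (0:ℝ) ≤ b * p) (by positivity : (0:ℝ) ≤ 4 * Cp ^ p),
        Real.mul_rpow hb.le hp0.le,
        Real.mul_rpow (by norm_num : (0:ℝ) ≤ 4) hCpp.le,
        Real.div_rpow hb.le (by norm_num : (0:ℝ) ≤ 4),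
        Real.div_rpow hp0.le hCpp.le]
      field_simp
    have claim3 : Cpq = k ^ (4 - r) - k ^ (s - r) := by
      rw [hCpq, fk, fk]
    calc μstar * E₀
        = Cpq * ((a / 2) * (b * p / (4 * Cp ^ p)) ^ ((2 - r) / (s - 4)) /
            c ^ (q * (1 - δq) + p * (1 - δp) * (2 - r) / (s - 4)) * c ^ (q * (1 - δq)) +
          (b / 4) ^ ((s - r) / (s - 4)) * (p / Cp ^ p) ^ ((4 - r) / (s - 4)) /
            c ^ (q * (1 - δq) + p * (1 - δp) * (4 - r) / (s - 4)) * c ^ (q * (1 - δq))) := by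
          rw [hμstar, hE₀def]
          field_simp
      _ = (k ^ (4 - r) - k ^ (s - r)) * (a / 2 * tb ^ (2 - r) + b / 4 * tb ^ (4 - r)) := by
          rw [claim1, claim2, claim3]
  -- h τ > 0
  have hτ2 : τ ^ (2:ℕ) = k ^ (2:ℝ) * tb ^ (2:ℝ) := by
    rw [hτdef, mul_pow, ← Real.rpow_natCast k 2, ← Real.rpow_natCast tb 2]
    norm_num
  have hτ4 : τ ^ (4:ℕ) = k ^ (4:ℝ) * tb ^ (4:ℝ) := by
    rw [hτdef, mul_pow, ← Real.rpow_natCast k 4, ← Real.rpow_natCast tb 4]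
    norm_num
  have hτs : A * τ ^ s = b / 4 * (k ^ s * tb ^ (4:ℝ)) := by
    rw [hτdef, Real.mul_rpow hk0.le htb0.le]
    have : tb ^ s = (b / (4 * A)) * tb ^ (4:ℝ) := by
      rw [← ftb4, ← Real.rpow_add htb0]
      congr 1; ring
    rw [this]
    field_simp
  have hτr : τ ^ r = k ^ r * tb ^ r := by
    rw [hτdef, Real.mul_rpow hk0.le htb0.le]
  have pk1 : k ^ (4 - r) * k ^ r = k ^ (4:ℝ) := by
    rw [← Real.rpow_add hk0]; norm_num
  have pk2 : k ^ (s - r) * k ^ r = k ^ s := by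
    rw [← Real.rpow_add hk0]; congr 1; ring
  have pt1 : tb ^ (2 - r) * tb ^ r = tb ^ (2:ℝ) := by
    rw [← Real.rpow_add htb0]; norm_num
  have pt2 : tb ^ (4 - r) * tb ^ r = tb ^ (4:ℝ) := by
    rw [← Real.rpow_add htb0]; norm_num
  have hk42 : k ^ (4:ℝ) < k ^ (2:ℝ) :=
    Real.rpow_lt_rpow_of_exponent_gt hk0 hk1 (by norm_num)
  have hks : 0 < k ^ s := Real.rpow_pos_of_pos hk0 _
  have hv2 : 0 < tb ^ (2:ℝ) := Real.rpow_pos_of_pos htb0 _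
  have hv4 : 0 < tb ^ (4:ℝ) := Real.rpow_pos_of_pos htb0 _
  have hk20 : 0 < k ^ (2:ℝ) := Real.rpow_pos_of_pos hk0 _
  have hτpos : 0 < h τ := by
    have hEbound : (μ * E₀) * τ ^ r < μstar * E₀ * τ ^ r := by
      apply mul_lt_mul_of_pos_right _ (Real.rpow_pos_of_pos hτ0 r)
      exact mul_lt_mul_of_pos_right hμ hE₀
    have hexp : μstar * E₀ * τ ^ r =
        a / 2 * (k ^ (4:ℝ) * tb ^ (2:ℝ)) + b / 4 * (k ^ (4:ℝ) * tb ^ (4:ℝ))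
        - a / 2 * (k ^ s * tb ^ (2:ℝ)) - b / 4 * (k ^ s * tb ^ (4:ℝ)) := by
      rw [hμE, hτr]
      rw [show (k ^ (4 - r) - k ^ (s - r)) * (a / 2 * tb ^ (2 - r) + b / 4 * tb ^ (4 - r)) *
          (k ^ r * tb ^ r)
          = a / 2 * ((k ^ (4-r) * k ^ r) * (tb ^ (2-r) * tb ^ r))
          + b / 4 * ((k ^ (4-r) * k ^ r) * (tb ^ (4-r) * tb ^ r))
          - a / 2 * ((k ^ (s-r) * k ^ r) * (tb ^ (2-r) * tb ^ r))
          - b / 4 * ((k ^ (s-r) * k ^ r) * (tb ^ (4-r) * tb ^ r)) by ring]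
      rw [pk1, pk2, pt1, pt2]
    have hhτ : h τ = a / 2 * (k ^ (2:ℝ) * tb ^ (2:ℝ)) + b / 4 * (k ^ (4:ℝ) * tb ^ (4:ℝ))
        - b / 4 * (k ^ s * tb ^ (4:ℝ)) - (μ * E₀) * τ ^ r := by
      rw [hh' τ, hτ2, hτ4, hτs]
    rw [hhτ]
    have : (μ * E₀) * τ ^ r < a / 2 * (k ^ (2:ℝ) * tb ^ (2:ℝ)) + b / 4 * (k ^ (4:ℝ) * tb ^ (4:ℝ))
        - b / 4 * (k ^ s * tb ^ (4:ℝ)) := by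
      rw [← sub_pos]
      have step1 : 0 < a / 2 * ((k ^ (2:ℝ) - k ^ (4:ℝ) + k ^ s) * tb ^ (2:ℝ)) :=
        mul_pos (by linarith) (mul_pos (by linarith [hk42, hks]) hv2)
      calc 0 < a / 2 * ((k ^ (2:ℝ) - k ^ (4:ℝ) + k ^ s) * tb ^ (2:ℝ)) := step1
        _ = a / 2 * (k ^ (2:ℝ) * tb ^ (2:ℝ)) + b / 4 * (k ^ (4:ℝ) * tb ^ (4:ℝ))
            - b / 4 * (k ^ s * tb ^ (4:ℝ)) - (a / 2 * (k ^ (4:ℝ) * tb ^ (2:ℝ))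
            + b / 4 * (k ^ (4:ℝ) * tb ^ (4:ℝ)) - a / 2 * (k ^ s * tb ^ (2:ℝ))
            - b / 4 * (k ^ s * tb ^ (4:ℝ))) := by ring
        _ ≤ a / 2 * (k ^ (2:ℝ) * tb ^ (2:ℝ)) + b / 4 * (k ^ (4:ℝ) * tb ^ (4:ℝ))
            - b / 4 * (k ^ s * tb ^ (4:ℝ)) - (μ * E₀) * τ ^ r := by
              rw [← hexp]; linarith [hEbound]
    linarith
  exact key_lemma a b A (μ * E₀) r s ha hb hA (by positivity) hr0 hr2 hs4 h hh' τ hτ0 hτpos
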